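/- Let R be a domain over a field F generated as an F-algebra by x₁, …, xₙ, and let x be an element of R that is not a zero divisor. Suppose that for every j there exists a polynomial f_j(t) = c₀tᴺ + ⋯ + c_N over F with c₀, c_N ≠ 0 such that c₀xᴺx_j + c₁xᴺ⁻¹x_j x + ⋯ + c_N x_j xᴺ = 0. Then x is an FA-element of R, i.e., the analogous polynomial identity holds for every element a of R. -/

import Mathlib

/-- `x` is an element of finite adjoint action (FA-element) in the domain `R` over
the field `F`. -/
def IsFA (F : Type*) {R : Type*} [Field F] [Ring R] [Algebra F R] (x : R) : Prop :=
  x ≠ 0 ∧ ∀ a : R, ∃ (N : ℕ) (c : ℕ → F), c 0 ≠ 0 ∧ c N ≠ 0 ∧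
    ∑ i ∈ Finset.range (N + 1), c i • (x ^ (N - i) * a * x ^ i) = 0

namespace IsFAProof

variable {F R : Type*} [Field F] [Ring R] [Algebra F R]

/-- Mirrored form of the FA relation for a single element. -/
def Rel (F : Type*) {R : Type*} [Field F] [Ring R] [Algebra F R] (x a : R) : Prop :=
  ∃ (N : ℕ) (c : ℕ → F), c 0 ≠ 0 ∧ c N ≠ 0 ∧
    ∑ i ∈ Finset.range (N + 1), c i • (x ^ i * a * x ^ (N - i)) = 0

lemma rel_of_statement {x a : R} (N : ℕ) (c : ℕ → F) (h0 : c 0 ≠ 0) (hN : c N ≠ 0)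
    (hs : ∑ i ∈ Finset.range (N + 1), c i • (x ^ (N - i) * a * x ^ i) = 0) :
    Rel F x a := by
  refine ⟨N, fun i => c (N - i), by simpa using hN, by simpa using h0, ?_⟩
  rw [← Finset.sum_range_reflect]
  rw [← hs]
  refine Finset.sum_congr rfl fun j hj => ?_
  have hjN : j ≤ N := by simpa [Nat.lt_succ_iff] using hj
  have h1 : N + 1 - 1 - j = N - j := by omega
  have h2 : N - (N - j) = j := by omega
  rw [h1]
  simp only [h2]

lemma statement_of_rel {x a : R} (h : Rel F x a) :
    ∃ (N : ℕ) (c : ℕ → F), c 0 ≠ 0 ∧ c N ≠ 0 ∧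
      ∑ i ∈ Finset.range (N + 1), c i • (x ^ (N - i) * a * x ^ i) = 0 := by
  obtain ⟨N, c, h0, hN, hs⟩ := h
  refine ⟨N, fun i => c (N - i), by simpa using hN, by simpa using h0, ?_⟩
  rw [← Finset.sum_range_reflect]
  rw [← hs]
  refine Finset.sum_congr rfl fun j hj => ?_
  have hjN : j ≤ N := by simpa [Nat.lt_succ_iff] using hj
  have h1 : N + 1 - 1 - j = N - j := by omega
  have h2 : N - (N - j) = j := by omega
  rw [h1]
  simp only [h2]

lemma rel_zero (x : R) : Rel F x 0 :=
  ⟨0, fun _ => 1, one_ne_zero, one_ne_zero, by simp⟩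

lemma rel_algebraMap (x : R) (r : F) : Rel F x (algebraMap F R r) := by
  refine ⟨1, fun i => if i = 0 then 1 else -1, by simp, by simp, ?_⟩
  simp [Finset.sum_range_succ, Algebra.commutes]

/-- Left-reduction: with a relation whose leading coefficient is nonzero, every word
`x^α * a * x^(m-α)` lies in the span of those with `α < N`. -/
lemma spanA {x a : R} {N : ℕ} (hN : 0 < N) (d : ℕ → F) (hdN : d N ≠ 0)
    (hrel : ∑ i ∈ Finset.range (N + 1), d i • (x ^ i * a * x ^ (N - i)) = 0)
    (m : ℕ) : ∀ α, α ≤ m →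
      x ^ α * a * x ^ (m - α) ∈
        Submodule.span F ((fun i => x ^ i * a * x ^ (m - i)) '' {i | i < N ∧ i ≤ m}) := by
  intro α
  induction α using Nat.strong_induction_on with
  | _ α IH =>
    intro hαm
    by_cases hα : α < N
    · exact Submodule.subset_span ⟨α, ⟨hα, hαm⟩, rfl⟩
    · push_neg at hα
      have key : ∑ i ∈ Finset.range (N + 1),
          d i • (x ^ (α - N + i) * a * x ^ (m - (α - N + i))) = 0 := by
        have h := congrArg (fun z => x ^ (α - N) * z * x ^ (m - α)) hrel
        simp only [Finset.sum_mul, Finset.mul_sum, mul_zero, zero_mul] at h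
        rw [← h]
        refine Finset.sum_congr rfl fun i hi => ?_
        have hiN : i ≤ N := by simpa [Nat.lt_succ_iff] using hi
        have hexp : m - (α - N + i) = (N - i) + (m - α) := by omega
        rw [hexp]
        simp [pow_add, mul_assoc, mul_smul_comm, smul_mul_assoc]
      rw [Finset.sum_range_succ] at key
      have hαN : α - N + N = α := by omega
      rw [hαN] at key
      have hv : d N • (x ^ α * a * x ^ (m - α)) =
          -(∑ i ∈ Finset.range N, d i • (x ^ (α - N + i) * a * x ^ (m - (α - N + i)))) :=
        eq_neg_of_add_eq_zero_right key
      have hsum : (∑ i ∈ Finset.range N,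
          d i • (x ^ (α - N + i) * a * x ^ (m - (α - N + i)))) ∈
          Submodule.span F ((fun i => x ^ i * a * x ^ (m - i)) '' {i | i < N ∧ i ≤ m}) := by
        refine Submodule.sum_mem _ fun i hi => Submodule.smul_mem _ _ ?_
        have hiN : i < N := Finset.mem_range.mp hi
        exact IH (α - N + i) (by omega) (by omega)
      have : d N • (x ^ α * a * x ^ (m - α)) ∈
          Submodule.span F ((fun i => x ^ i * a * x ^ (m - i)) '' {i | i < N ∧ i ≤ m}) := by
        rw [hv]; exact Submodule.neg_mem _ hsum
      have h2 := Submodule.smul_mem _ (d N)⁻¹ this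
      rwa [inv_smul_smul₀ hdN] at h2

/-- Right-reduction: with a relation whose constant coefficient is nonzero, every word
`x^(p-γ) * b * x^γ` lies in the span of those with `γ < M`. -/
lemma spanB {x b : R} {M : ℕ} (hM : 0 < M) (e : ℕ → F) (he0 : e 0 ≠ 0)
    (hrel : ∑ j ∈ Finset.range (M + 1), e j • (x ^ j * b * x ^ (M - j)) = 0)
    (p : ℕ) : ∀ γ, γ ≤ p →
      x ^ (p - γ) * b * x ^ γ ∈
        Submodule.span F ((fun j => x ^ (p - j) * b * x ^ j) '' {j | j < M ∧ j ≤ p}) := by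
  intro γ
  induction γ using Nat.strong_induction_on with
  | _ γ IH =>
    intro hγp
    by_cases hγ : γ < M
    · exact Submodule.subset_span ⟨γ, ⟨hγ, hγp⟩, rfl⟩
    · push_neg at hγ
      have key : ∑ j ∈ Finset.range (M + 1),
          e j • (x ^ (p - (γ - j)) * b * x ^ (γ - j)) = 0 := by
        have h := congrArg (fun z => x ^ (p - γ) * z * x ^ (γ - M)) hrel
        simp only [Finset.sum_mul, Finset.mul_sum, mul_zero, zero_mul] at h
        rw [← h]
        refine Finset.sum_congr rfl fun j hj => ?_
        have hjM : j ≤ M := by simpa [Nat.lt_succ_iff] using hj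
        have hexp1 : p - (γ - j) = (p - γ) + j := by omega
        have hexp2 : γ - j = (M - j) + (γ - M) := by omega
        rw [hexp1, hexp2]
        simp [pow_add, mul_assoc, mul_smul_comm, smul_mul_assoc]
      rw [Finset.sum_range_succ'] at key
      have hv : e 0 • (x ^ (p - γ) * b * x ^ γ) =
          -(∑ j ∈ Finset.range M, e (j + 1) • (x ^ (p - (γ - (j + 1))) * b * x ^ (γ - (j + 1)))) := by
        have h0 : γ - 0 = γ := by omega
        rw [h0] at key
        exact eq_neg_of_add_eq_zero_right key
      have hsum : (∑ j ∈ Finset.range M,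
          e (j + 1) • (x ^ (p - (γ - (j + 1))) * b * x ^ (γ - (j + 1)))) ∈
          Submodule.span F ((fun j => x ^ (p - j) * b * x ^ j) '' {j | j < M ∧ j ≤ p}) := by
        refine Submodule.sum_mem _ fun j hj => Submodule.smul_mem _ _ ?_
        have hjM : j < M := Finset.mem_range.mp hj
        exact IH (γ - (j + 1)) (by omega) (by omega)
      have : e 0 • (x ^ (p - γ) * b * x ^ γ) ∈
          Submodule.span F ((fun j => x ^ (p - j) * b * x ^ j) '' {j | j < M ∧ j ≤ p}) := by
        rw [hv]; exact Submodule.neg_mem _ hsum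
      have h2 := Submodule.smul_mem _ (e 0)⁻¹ this
      rwa [inv_smul_smul₀ he0] at h2

lemma span_mul_left (c : R) {S : Set R} {z : R} (hz : z ∈ Submodule.span F S) :
    c * z ∈ Submodule.span F ((fun w => c * w) '' S) := by
  have h := Submodule.mem_map_of_mem (f := LinearMap.mulLeft F c) hz
  rw [Submodule.map_span] at h
  exact h

lemma span_mul_right (c : R) {S : Set R} {z : R} (hz : z ∈ Submodule.span F S) :
    z * c ∈ Submodule.span F ((fun w => w * c) '' S) := by
  have h := Submodule.mem_map_of_mem (f := LinearMap.mulRight F c) hz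
  rw [Submodule.map_span] at h
  exact h

lemma exists_dep {x y : R} (m : ℕ) (G : Finset R) (hc : G.card ≤ m)
    (hmem : ∀ k, k ≤ m → x ^ k * y * x ^ (m - k) ∈ Submodule.span F (G : Set R)) :
    ∃ g : ℕ → F, (∃ k, k ≤ m ∧ g k ≠ 0) ∧
      ∑ k ∈ Finset.range (m + 1), g k • (x ^ k * y * x ^ (m - k)) = 0 := by
  classical
  set T := Submodule.span F (G : Set R) with hT
  haveI : FiniteDimensional F T := FiniteDimensional.span_of_finite F G.finite_toSet
  set v : Fin (m + 1) → T := fun k =>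
    ⟨x ^ (k : ℕ) * y * x ^ (m - (k : ℕ)), hmem k (Nat.lt_succ_iff.mp k.isLt)⟩ with hv
  have hnli : ¬ LinearIndependent F v := by
    intro hli
    have h1 := hli.fintype_card_le_finrank
    have h2 : Module.finrank F T ≤ G.card := finrank_span_finset_le_card G
    simp only [Fintype.card_fin] at h1
    omega
  rw [Fintype.not_linearIndependent_iff] at hnli
  obtain ⟨g, hg0, i0, hi0⟩ := hnli
  refine ⟨fun k => if h : k < m + 1 then g ⟨k, h⟩ else 0,
    ⟨(i0 : ℕ), Nat.lt_succ_iff.mp i0.isLt, by simp [i0.isLt]; exact hi0⟩, ?_⟩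
  have hcast := congrArg (Subtype.val) hg0
  push_cast at hcast
  rw [← Fin.sum_univ_eq_sum_range
    (fun k => (if h : k < m + 1 then g ⟨k, h⟩ else 0) • (x ^ k * y * x ^ (m - k))) (m + 1)]
  rw [← hcast]
  refine Finset.sum_congr rfl fun i _ => ?_
  simp [v, i.isLt]

lemma rel_of_dep [IsDomain R] {x : R} (hx : x ≠ 0) {y : R} (m : ℕ) (g : ℕ → F)
    (hne : ∃ k, k ≤ m ∧ g k ≠ 0)
    (hsum : ∑ k ∈ Finset.range (m + 1), g k • (x ^ k * y * x ^ (m - k)) = 0) :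
    Rel F x y := by
  classical
  obtain ⟨k0, hk0m, hk0⟩ := hne
  set s := (Finset.range (m + 1)).filter (fun k => g k ≠ 0) with hs
  have hsne : s.Nonempty := ⟨k0, by simp [hs, Nat.lt_succ_iff, hk0m, hk0]⟩
  set p := s.min' hsne with hp
  set q := s.max' hsne with hq
  have hpmem : p ∈ s := s.min'_mem hsne
  have hqmem : q ∈ s := s.max'_mem hsne
  have hgp : g p ≠ 0 := (Finset.mem_filter.mp hpmem).2
  have hgq : g q ≠ 0 := (Finset.mem_filter.mp hqmem).2
  have hqm : q ≤ m := Nat.lt_succ_iff.mp (Finset.mem_range.mp (Finset.mem_filter.mp hqmem).1)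
  have hpq : p ≤ q := s.min'_le q hqmem
  have hout : ∀ k ∈ Finset.range (m + 1), k ∉ Finset.Ico p (q + 1) →
      g k • (x ^ k * y * x ^ (m - k)) = 0 := by
    intro k hk hk2
    by_cases hgk : g k = 0
    · simp [hgk]
    · exfalso
      have hks : k ∈ s := Finset.mem_filter.mpr ⟨hk, hgk⟩
      have h1 := s.min'_le k hks
      have h2 := s.le_max' k hks
      simp only [Finset.mem_Ico, not_and, not_lt] at hk2
      omega
  have key : x ^ p * (∑ i ∈ Finset.range (q - p + 1),
      g (p + i) • (x ^ i * y * x ^ (q - p - i))) * x ^ (m - q) = 0 := by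
    have e1 : x ^ p * (∑ i ∈ Finset.range (q - p + 1),
        g (p + i) • (x ^ i * y * x ^ (q - p - i))) * x ^ (m - q)
        = ∑ i ∈ Finset.range (q - p + 1),
          g (p + i) • (x ^ (p + i) * y * x ^ (m - (p + i))) := by
      rw [Finset.mul_sum, Finset.sum_mul]
      refine Finset.sum_congr rfl fun i hi => ?_
      have hiq : i ≤ q - p := by simpa [Nat.lt_succ_iff] using hi
      have hexp : m - (p + i) = (q - p - i) + (m - q) := by omega
      rw [hexp]
      simp [pow_add, mul_assoc, mul_smul_comm, smul_mul_assoc]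
    have e2 : ∑ i ∈ Finset.range (q - p + 1),
        g (p + i) • (x ^ (p + i) * y * x ^ (m - (p + i)))
        = ∑ k ∈ Finset.Ico p (q + 1), g k • (x ^ k * y * x ^ (m - k)) := by
      rw [Finset.sum_Ico_eq_sum_range]
      have : q + 1 - p = q - p + 1 := by omega
      rw [this]
    have e3 : ∑ k ∈ Finset.Ico p (q + 1), g k • (x ^ k * y * x ^ (m - k))
        = ∑ k ∈ Finset.range (m + 1), g k • (x ^ k * y * x ^ (m - k)) := by
      refine Finset.sum_subset ?_ hout
      intro k hk
      simp only [Finset.mem_Ico] at hk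
      simp only [Finset.mem_range]
      omega
    rw [e1, e2, e3, hsum]
  have hu : (∑ i ∈ Finset.range (q - p + 1),
      g (p + i) • (x ^ i * y * x ^ (q - p - i))) = 0 := by
    rcases mul_eq_zero.mp key with h | h
    · rcases mul_eq_zero.mp h with h' | h'
      · exact absurd h' (pow_ne_zero _ hx)
      · exact h'
    · exact absurd h (pow_ne_zero _ hx)
  refine ⟨q - p, fun i => g (p + i), by simpa using hgp, ?_, hu⟩
  show g (p + (q - p)) ≠ 0
  rw [show p + (q - p) = q by omega]
  exact hgq

lemma rel_add [IsDomain R] {x : R} (hx : x ≠ 0) {a b : R}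
    (ha : Rel F x a) (hb : Rel F x b) : Rel F x (a + b) := by
  classical
  obtain ⟨N, d, hd0, hdN, hda⟩ := ha
  obtain ⟨M, e, he0, heM, heb⟩ := hb
  rcases Nat.eq_zero_or_pos N with hN | hN
  · subst hN
    have : a = 0 := by
      have h1 : d 0 • a = 0 := by simpa using hda
      exact (smul_eq_zero.mp h1).resolve_left hd0
    rw [this, zero_add]
    exact ⟨M, e, he0, heM, heb⟩
  rcases Nat.eq_zero_or_pos M with hM | hM
  · subst hM
    have : b = 0 := by
      have h1 : e 0 • b = 0 := by simpa using heb
      exact (smul_eq_zero.mp h1).resolve_left he0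
    rw [this, add_zero]
    exact ⟨N, d, hd0, hdN, hda⟩
  set m := N + M with hm
  set G : Finset R := ((Finset.range N).image fun i => x ^ i * a * x ^ (m - i)) ∪
    ((Finset.range M).image fun j => x ^ (m - j) * b * x ^ j) with hG
  have hcard : G.card ≤ m := by
    refine le_trans (Finset.card_union_le _ _) ?_
    have h1 := Finset.card_image_le (s := Finset.range N)
      (f := fun i => x ^ i * a * x ^ (m - i))
    have h2 := Finset.card_image_le (s := Finset.range M)
      (f := fun j => x ^ (m - j) * b * x ^ j)
    simp only [Finset.card_range] at h1 h2
    omega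
  have hmem : ∀ k, k ≤ m → x ^ k * (a + b) * x ^ (m - k) ∈
      Submodule.span F (G : Set R) := by
    intro k hk
    have h1 : x ^ k * a * x ^ (m - k) ∈ Submodule.span F (G : Set R) := by
      refine Submodule.span_mono ?_ (spanA hN d hdN hda m k hk)
      rintro _ ⟨i, ⟨hiN, _⟩, rfl⟩
      exact Finset.mem_coe.mpr (Finset.mem_union_left _
        (Finset.mem_image.mpr ⟨i, Finset.mem_range.mpr hiN, rfl⟩))
    have h2 : x ^ k * b * x ^ (m - k) ∈ Submodule.span F (G : Set R) := by
      have hB := spanB hM e he0 heb m (m - k) (by omega)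
      rw [show m - (m - k) = k by omega] at hB
      refine Submodule.span_mono ?_ hB
      rintro _ ⟨j, ⟨hjM, _⟩, rfl⟩
      exact Finset.mem_coe.mpr (Finset.mem_union_right _
        (Finset.mem_image.mpr ⟨j, Finset.mem_range.mpr hjM, rfl⟩))
    have heq : x ^ k * (a + b) * x ^ (m - k)
        = x ^ k * a * x ^ (m - k) + x ^ k * b * x ^ (m - k) := by
      rw [mul_add, add_mul]
    rw [heq]
    exact Submodule.add_mem _ h1 h2
  obtain ⟨g, hg, hgs⟩ := exists_dep m G hcard hmem
  exact rel_of_dep hx m g hg hgs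

lemma rel_mul [IsDomain R] {x : R} (hx : x ≠ 0) {a b : R}
    (ha : Rel F x a) (hb : Rel F x b) : Rel F x (a * b) := by
  classical
  obtain ⟨N, d, hd0, hdN, hda⟩ := ha
  obtain ⟨M, e, he0, heM, heb⟩ := hb
  rcases Nat.eq_zero_or_pos N with hN | hN
  · subst hN
    have : a = 0 := by
      have h1 : d 0 • a = 0 := by simpa using hda
      exact (smul_eq_zero.mp h1).resolve_left hd0
    rw [this, zero_mul]
    exact rel_zero x
  rcases Nat.eq_zero_or_pos M with hM | hM
  · subst hM
    have : b = 0 := by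
      have h1 : e 0 • b = 0 := by simpa using heb
      exact (smul_eq_zero.mp h1).resolve_left he0
    rw [this, mul_zero]
    exact rel_zero x
  set m := N * M with hm
  set G : Finset R := (Finset.range N ×ˢ Finset.range M).image
    (fun pr => x ^ pr.1 * a * x ^ (m - pr.1 - pr.2) * (b * x ^ pr.2)) with hG
  have hcard : G.card ≤ m := by
    refine le_trans (Finset.card_image_le) ?_
    simp [hm]
  have hmem : ∀ k, k ≤ m → x ^ k * (a * b) * x ^ (m - k) ∈
      Submodule.span F (G : Set R) := by
    intro k hk
    have hB := spanB hM e he0 heb (m - k) (m - k) le_rfl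
    rw [Nat.sub_self, pow_zero, one_mul] at hB
    have h1 := span_mul_left (F := F) (x ^ k * a) hB
    have heq0 : x ^ k * (a * b) * x ^ (m - k) = x ^ k * a * (b * x ^ (m - k)) := by
      simp [mul_assoc]
    rw [heq0]
    refine Submodule.span_le.mpr ?_ h1
    rintro _ ⟨_, ⟨j, ⟨hjM, hjmk⟩, rfl⟩, rfl⟩
    simp only [SetLike.mem_coe]
    have hA := spanA hN d hdN hda (m - j) k (by omega)
    have h2 := span_mul_right (F := F) (b * x ^ j) hA
    have heq1 : x ^ k * a * (x ^ (m - k - j) * b * x ^ j)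
        = x ^ k * a * x ^ (m - j - k) * (b * x ^ j) := by
      rw [show m - k - j = m - j - k by omega]
      simp [mul_assoc]
    rw [heq1]
    refine Submodule.span_le.mpr ?_ h2
    rintro _ ⟨_, ⟨i, ⟨hiN, him⟩, rfl⟩, rfl⟩
    simp only [SetLike.mem_coe]
    apply Submodule.subset_span
    refine Finset.mem_coe.mpr (Finset.mem_image.mpr ⟨(i, j), ?_, ?_⟩)
    · exact Finset.mem_product.mpr ⟨Finset.mem_range.mpr hiN, Finset.mem_range.mpr hjM⟩
    · rw [show m - i - j = m - j - i by omega]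
  obtain ⟨g, hg, hgs⟩ := exists_dep m G hcard hmem
  exact rel_of_dep hx m g hg hgs

end IsFAProof

/-- If `R` is a domain over `F` generated as an `F`-algebra by `x₁, …, xₙ`, `x` is a
nonzero element (hence not a zero divisor), and for every generator `xⱼ` there is a
polynomial `f_j(t) = c₀ t^N + ⋯ + c_N` over `F` with `c₀, c_N ≠ 0` satisfying
`c₀ x^N xⱼ + c₁ x^(N-1) xⱼ x + ⋯ + c_N xⱼ x^N = 0`, then `x` is an FA-element of `R`. -/
theorem isFA_of_generators {F R : Type*} [Field F] [Ring R] [IsDomain R] [Algebra F R]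
    (n : ℕ) (xs : Fin n → R) (hgen : Algebra.adjoin F (Set.range xs) = ⊤)
    (x : R) (hx : x ≠ 0)
    (h : ∀ j : Fin n, ∃ (N : ℕ) (c : ℕ → F), c 0 ≠ 0 ∧ c N ≠ 0 ∧
      ∑ i ∈ Finset.range (N + 1), c i • (x ^ (N - i) * xs j * x ^ i) = 0) :
    IsFA F x := by
  refine ⟨hx, fun a => ?_⟩
  have hmem : a ∈ Algebra.adjoin F (Set.range xs) := by rw [hgen]; trivial
  have hrel : IsFAProof.Rel F x a := by
    induction hmem using Algebra.adjoin_induction with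
    | mem y hy =>
      obtain ⟨j, rfl⟩ := hy
      obtain ⟨N, c, h0, hN, hs⟩ := h j
      exact IsFAProof.rel_of_statement N c h0 hN hs
    | algebraMap r => exact IsFAProof.rel_algebraMap x r
    | add y z _ _ hy hz => exact IsFAProof.rel_add hx hy hz
    | mul y z _ _ hy hz => exact IsFAProof.rel_mul hx hy hz
  exact IsFAProof.statement_of_rel hrel
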